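/- Convolution theorem for P̄: for f, g ∈ S(ℝ²ⁿ) and α ∈ (ℝ \ {0})ⁿ, P̄_α(f * g) = (P̄_α f) * (P̄_α g), with convolution on ℝ²ⁿ on the left and on ℝⁿ on the right. -/

import Mathlib

open MeasureTheory SchwartzMap FourierTransform Real

noncomputable section

abbrev En (n : ℕ) := EuclideanSpace ℝ (Fin n)
abbrev E2n (n : ℕ) := WithLp 2 (En n × En n)

instance (n : ℕ) : MeasureSpace (E2n n) where
  toMeasurableSpace := WithLp.measurableSpace 2 (En n × En n)
  volume := (volume : Measure (En n × En n)).map (WithLp.toLp 2)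
instance (n : ℕ) : BorelSpace (E2n n) := inferInstanceAs (BorelSpace (WithLp 2 (En n × En n)))

/-- The uncoupled photography transform `P̄`, with one parameter `αᵢ` per pair `(xᵢ, uᵢ)`. -/
def photoBar (n : ℕ) (f : E2n n → ℂ) (α : Fin n → ℝ) (xbar : En n) : ℂ :=
  (∏ i, |α i|)⁻¹ •
    ∫ u : En n, f (WithLp.toLp 2 ((WithLp.toLp 2 (fun i => (α i)⁻¹ * xbar i + (1 - (α i)⁻¹) * u i) : En n), u))
namespace PhotoBarAux

variable {n : ℕ}

lemma norm_snd_le (z : E2n n) : ‖z.ofLp.2‖ ≤ ‖z‖ := by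
  have h := Real.sqrt_le_sqrt (show ‖z.ofLp.2‖ ^ 2 ≤ ‖z.ofLp.1‖ ^ 2 + ‖z.ofLp.2‖ ^ 2 by nlinarith [sq_nonneg ‖z.ofLp.1‖])
  rw [Real.sqrt_sq (norm_nonneg _)] at h
  rw [WithLp.prod_norm_eq_of_L2]
  exact h

lemma decay_bound (f : 𝓢(E2n n, ℂ)) :
    ∃ C : ℝ, 0 ≤ C ∧ ∀ z : E2n n, ‖f z‖ ≤ C * (1 + ‖z‖) ^ (-((n : ℝ) + 1)) := by
  have key : ∀ z : E2n n, (1 + ‖z‖) ^ (n + 1) * ‖f z‖ ≤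
      2 ^ (n + 1) * (Finset.Iic ((n + 1 : ℕ), (0 : ℕ))).sup
        (schwartzSeminormFamily ℝ (E2n n) ℂ) f := by
    intro z
    have h := one_add_le_sup_seminorm_apply (𝕜 := ℝ) (m := ((n + 1 : ℕ), (0 : ℕ)))
      (k := n + 1) (n := 0) le_rfl le_rfl f z
    simp only [norm_iteratedFDeriv_zero] at h
    exact h
  refine ⟨2 ^ (n + 1) * (Finset.Iic ((n + 1 : ℕ), (0 : ℕ))).sup
      (schwartzSeminormFamily ℝ (E2n n) ℂ) f, ?_, ?_⟩
  · exact le_trans (by positivity) (key 0)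
  · intro z
    have hpos : (0 : ℝ) < 1 + ‖z‖ := by positivity
    have hpow : (1 + ‖z‖) ^ (-((n : ℝ) + 1)) = ((1 + ‖z‖) ^ ((n + 1 : ℕ)))⁻¹ := by
      rw [show -((n : ℝ) + 1) = -(((n + 1 : ℕ) : ℝ)) by push_cast; ring,
        Real.rpow_neg hpos.le, Real.rpow_natCast]
    have hx : (0 : ℝ) < (1 + ‖z‖) ^ (n + 1) := by positivity
    rw [hpow, ← div_eq_mul_inv, le_div_iff₀ hx, mul_comm]
    exact key z

lemma base_int : Integrable (fun u : En n => (1 + ‖u‖) ^ (-((n : ℝ) + 1))) := by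
  apply integrable_one_add_norm (E := En n)
  rw [finrank_euclideanSpace_fin]
  exact lt_add_one _

variable (α : Fin n → ℝ)

/-- The affine (linear in `(a, u)`) parametrization appearing in `photoBar`. -/
def T (a u : En n) : E2n n :=
  WithLp.toLp 2 ((WithLp.toLp 2 (fun i => (α i)⁻¹ * a i + (1 - (α i)⁻¹) * u i) : En n), u)

lemma T_sub (a b u v : En n) : T α a u - T α b v = T α (a - b) (u - v) := by
  show WithLp.toLp 2 _ - WithLp.toLp 2 _ = WithLp.toLp 2 _
  rw [← WithLp.toLp_sub]
  congr 1
  refine Prod.ext (PiLp.ext fun i => ?_) rfl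
  show ((α i)⁻¹ * a i + (1 - (α i)⁻¹) * u i) - ((α i)⁻¹ * b i + (1 - (α i)⁻¹) * v i)
      = (α i)⁻¹ * (a i - b i) + (1 - (α i)⁻¹) * (u i - v i)
  ring

variable (hα : ∀ i, α i ≠ 0)
include hα

/-- The linear change of variables `(y, v) ↦ T α y v`. -/
def Lam (hα : ∀ i, α i ≠ 0) : (En n × En n) ≃ₗ[ℝ] (En n × En n) where
  toFun p := ((WithLp.toLp 2 (fun i => (α i)⁻¹ * p.1 i + (1 - (α i)⁻¹) * p.2 i) : En n), p.2)
  invFun p := ((WithLp.toLp 2 (fun i => α i * p.1 i + (1 - α i) * p.2 i) : En n), p.2)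
  map_add' p q := by
    refine Prod.ext (PiLp.ext fun i => ?_) rfl
    show (α i)⁻¹ * (p.1 i + q.1 i) + (1 - (α i)⁻¹) * (p.2 i + q.2 i)
        = ((α i)⁻¹ * p.1 i + (1 - (α i)⁻¹) * p.2 i) + ((α i)⁻¹ * q.1 i + (1 - (α i)⁻¹) * q.2 i)
    ring
  map_smul' r p := by
    refine Prod.ext (PiLp.ext fun i => ?_) rfl
    show (α i)⁻¹ * (r * p.1 i) + (1 - (α i)⁻¹) * (r * p.2 i)
        = r * ((α i)⁻¹ * p.1 i + (1 - (α i)⁻¹) * p.2 i)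
    ring
  left_inv p := by
    refine Prod.ext (PiLp.ext fun i => ?_) rfl
    show α i * ((α i)⁻¹ * p.1 i + (1 - (α i)⁻¹) * p.2 i) + (1 - α i) * p.2 i = p.1 i
    have h := hα i
    field_simp
    ring
  right_inv p := by
    refine Prod.ext (PiLp.ext fun i => ?_) rfl
    show (α i)⁻¹ * (α i * p.1 i + (1 - α i) * p.2 i) + (1 - (α i)⁻¹) * p.2 i = p.1 i
    have h := hα i
    field_simp
    ring

lemma Lam_apply (p : En n × En n) : WithLp.toLp 2 (Lam α hα p) = T α p.1 p.2 := rfl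

lemma det_Lam : LinearMap.det ((Lam α hα).toLinearMap) = ∏ i, (α i)⁻¹ := by
  classical
  set B := (PiLp.basisFun 2 ℝ (Fin n)).prod (PiLp.basisFun 2 ℝ (Fin n)) with hB
  rw [← LinearMap.det_toMatrix B]
  have hmat : LinearMap.toMatrix B B (Lam α hα).toLinearMap =
      Matrix.fromBlocks (Matrix.diagonal fun i => (α i)⁻¹)
        (Matrix.diagonal fun i => 1 - (α i)⁻¹) 0 1 := by
    ext i j
    rcases i with i | i <;> rcases j with j | j <;>
      · simp only [LinearMap.toMatrix_apply, hB, Module.Basis.prod_repr_inl, Module.Basis.prod_repr_inr,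
          Module.Basis.prod_apply_inl_fst, Module.Basis.prod_apply_inl_snd, Module.Basis.prod_apply_inr_fst,
          Module.Basis.prod_apply_inr_snd, PiLp.basisFun_repr, PiLp.basisFun_apply, Lam,
          LinearEquiv.coe_mk, LinearMap.coe_mk, AddHom.coe_mk, Matrix.fromBlocks_apply₁₁,
          Matrix.fromBlocks_apply₁₂, Matrix.fromBlocks_apply₂₁, Matrix.fromBlocks_apply₂₂,
          Matrix.diagonal_apply, Matrix.one_apply, Matrix.zero_apply]
        rcases eq_or_ne i j with h | h <;>
          simp [h, PiLp.toLp_single, EuclideanSpace.single_apply, eq_comm]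
  rw [hmat, Matrix.det_fromBlocks_zero₂₁, Matrix.det_diagonal, Matrix.det_one, mul_one]

lemma det_Lam_ne : LinearMap.det ((Lam α hα).toLinearMap) ≠ 0 := by
  rw [det_Lam α hα]
  exact Finset.prod_ne_zero_iff.2 fun i _ => inv_ne_zero (hα i)

/-- the measurable equiv underlying `Lam` -/
def LamE : (En n × En n) ≃ᵐ (En n × En n) :=
  (Lam α hα).toContinuousLinearEquiv.toHomeomorph.toMeasurableEquiv

lemma LamE_coe : ⇑(LamE α hα) = ⇑(Lam α hα).toLinearMap := rfl

lemma map_LamE : Measure.map (LamE α hα) (volume : Measure (En n × En n)) =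
    ENNReal.ofReal |(∏ i, (α i)⁻¹)⁻¹| • volume := by
  haveI : Measure.IsAddHaarMeasure (volume : Measure (En n × En n)) :=
    Measure.prod.instIsAddHaarMeasure _ _
  rw [show Measure.map (LamE α hα) (volume : Measure (En n × En n)) =
      Measure.map ((Lam α hα).toLinearMap) volume from by rw [LamE_coe],
    Measure.map_linearMap_addHaar_eq_smul_addHaar _ (det_Lam_ne α hα), det_Lam α hα]

lemma integral_comp_Lam (h : (En n × En n) → ℂ) :
    ∫ p : En n × En n, h p = (∏ i, |α i|)⁻¹ • ∫ p : En n × En n, h (Lam α hα p) := by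
  have h1 : ∫ p : En n × En n, h (Lam α hα p) =
      (∏ i, |α i|) • ∫ p : En n × En n, h p := by
    calc ∫ p : En n × En n, h (Lam α hα p) = ∫ p, h (LamE α hα p) := rfl
      _ = ∫ q, h q ∂(Measure.map (LamE α hα) volume) := (integral_map_equiv (LamE α hα) h).symm
      _ = ∫ q, h q ∂(ENNReal.ofReal |(∏ i, (α i)⁻¹)⁻¹| • volume) := by rw [map_LamE α hα]
      _ = |(∏ i, (α i)⁻¹)⁻¹| • ∫ q, h q := by
          rw [integral_smul_measure, ENNReal.toReal_ofReal (abs_nonneg _)]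
      _ = (∏ i, |α i|) • ∫ p : En n × En n, h p := by
          congr 1
          simp [Finset.abs_prod, abs_inv, Finset.prod_inv_distrib]
  have hne : (∏ i, |α i|) ≠ 0 :=
    Finset.prod_ne_zero_iff.2 fun i _ => abs_ne_zero.2 (hα i)
  rw [h1, smul_smul, inv_mul_cancel₀ hne, one_smul]

lemma integrable_comp_Lam (G : (En n × En n) → ℂ) (hG : Integrable G) :
    Integrable (fun p => G (Lam α hα p)) := by
  have : Integrable G (Measure.map (LamE α hα) volume) := by
    rw [map_LamE α hα]
    exact hG.smul_measure ENNReal.ofReal_ne_top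
  exact (integrable_map_equiv (LamE α hα) G).mp this

lemma cont_T : Continuous fun p : En n × En n => T α p.1 p.2 := by
  exact (WithLp.prod_continuous_toLp 2 _ _).comp
    (LinearMap.continuous_of_finiteDimensional (Lam α hα).toLinearMap)

lemma slice_int (f : 𝓢(E2n n, ℂ)) (a : En n) (w : E2n n) :
    Integrable fun u : En n => f (T α a u - w) := by
  obtain ⟨C, hC0, hC⟩ := decay_bound f
  refine Integrable.mono' ((base_int.comp_sub_right w.ofLp.2).const_mul C) ?_ ?_
  · apply Continuous.aestronglyMeasurable
    exact f.continuous.comp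
      (((cont_T α hα).comp (Continuous.prodMk_right a)).sub continuous_const)
  · refine Filter.Eventually.of_forall fun u => ?_
    calc ‖f (T α a u - w)‖ ≤ C * (1 + ‖T α a u - w‖) ^ (-((n : ℝ) + 1)) := hC _
      _ ≤ C * (1 + ‖u - w.ofLp.2‖) ^ (-((n : ℝ) + 1)) := by
          refine mul_le_mul_of_nonneg_left ?_ hC0
          refine Real.rpow_le_rpow_of_nonpos (by positivity) ?_ (by
            simp only [neg_nonpos]; positivity)
          have : ‖u - w.ofLp.2‖ ≤ ‖T α a u - w‖ := norm_snd_le (T α a u - w)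
          linarith

lemma int_bound (f : 𝓢(E2n n, ℂ)) :
    ∃ K : ℝ, 0 ≤ K ∧ ∀ (a : En n) (w : E2n n),
      (∫ u : En n, ‖f (T α a u - w)‖) ≤ K := by
  obtain ⟨C, hC0, hC⟩ := decay_bound f
  refine ⟨C * ∫ u : En n, (1 + ‖u‖) ^ (-((n : ℝ) + 1)),
    mul_nonneg hC0 (integral_nonneg fun u => by positivity), fun a w => ?_⟩
  calc (∫ u : En n, ‖f (T α a u - w)‖)
      ≤ ∫ u : En n, C * (1 + ‖u - w.ofLp.2‖) ^ (-((n : ℝ) + 1)) := by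
        refine integral_mono (slice_int α hα f a w).norm
          ((base_int.comp_sub_right w.ofLp.2).const_mul C) fun u => ?_
        calc ‖f (T α a u - w)‖ ≤ C * (1 + ‖T α a u - w‖) ^ (-((n : ℝ) + 1)) := hC _
          _ ≤ C * (1 + ‖u - w.ofLp.2‖) ^ (-((n : ℝ) + 1)) := by
              refine mul_le_mul_of_nonneg_left ?_ hC0
              refine Real.rpow_le_rpow_of_nonpos (by positivity) ?_ (by
                simp only [neg_nonpos]; positivity)
              have : ‖u - w.ofLp.2‖ ≤ ‖T α a u - w‖ := norm_snd_le (T α a u - w)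
              linarith
    _ = C * ∫ u : En n, (1 + ‖u - w.ofLp.2‖) ^ (-((n : ℝ) + 1)) := integral_const_mul _ _
    _ = C * ∫ u : En n, (1 + ‖u‖) ^ (-((n : ℝ) + 1)) := by
        rw [integral_sub_right_eq_self (fun u : En n => (1 + ‖u‖) ^ (-((n : ℝ) + 1))) w.ofLp.2]

end PhotoBarAux

open PhotoBarAux

set_option maxHeartbeats 2000000 in
/-- convolution theorem for the uncoupled photography transform `P̄`. -/
theorem photoBar_convolution (n : ℕ) (f g : 𝓢(E2n n, ℂ)) (α : Fin n → ℝ)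
    (hα : ∀ i, α i ≠ 0) (xbar : En n) :
    photoBar n (fun z => ∫ w : E2n n, f (z - w) * g w) α xbar =
      ∫ y : En n, photoBar n (⇑f) α (xbar - y) * photoBar n (⇑g) α y := by
  classical
  obtain ⟨K, hK0, hK⟩ := int_bound α hα f
  set c : ℝ := (∏ i, |α i|)⁻¹ with hc
  -- continuity facts
  have hTc : Continuous fun p : En n × En n => T α p.1 p.2 := cont_T α hα
  have hgint : Integrable (fun p : En n × En n => g (T α p.1 p.2)) :=
    integrable_comp_Lam α hα (fun q => g (WithLp.toLp 2 q)) (by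
      haveI : Measure.IsAddHaarMeasure (volume : Measure (En n × En n)) :=
        Measure.prod.instIsAddHaarMeasure _ _
      haveI : Measure.IsAddHaarMeasure (Measure.map (⇑(MeasurableEquiv.toLp 2 (En n × En n)))
          (volume : Measure (En n × En n))) :=
        (WithLp.prodContinuousLinearEquiv (p := 2) (𝕜 := ℝ) (α := En n)
          (β := En n)).symm.isAddHaarMeasure_map _
      exact (integrable_map_equiv (MeasurableEquiv.toLp 2 (En n × En n)) (⇑g)).mp g.integrable)
  -- step A : change of variables in the inner integral
  have stepA : ∀ u : En n, (∫ w : E2n n, f (T α xbar u - w) * g w)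
      = c • ∫ p : En n × En n, f (T α xbar u - T α p.1 p.2) * g (T α p.1 p.2) := by
    intro u
    rw [show (∫ w : E2n n, f (T α xbar u - w) * g w) = ∫ q : En n × En n,
        f (T α xbar u - WithLp.toLp 2 q) * g (WithLp.toLp 2 q) from
      integral_map_equiv (MeasurableEquiv.toLp 2 (En n × En n))
        (fun w : E2n n => f (T α xbar u - w) * g w)]
    exact integral_comp_Lam α hα
      (fun q => f (T α xbar u - WithLp.toLp 2 q) * g (WithLp.toLp 2 q))
  -- joint integrability for the Fubini swap
  have hmeas : AEStronglyMeasurable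
      (Function.uncurry fun (u : En n) (p : En n × En n) =>
        f (T α xbar u - T α p.1 p.2) * g (T α p.1 p.2))
      ((volume : Measure (En n)).prod (volume : Measure (En n × En n))) := by
    apply Continuous.aestronglyMeasurable
    exact (f.continuous.comp
        ((hTc.comp (continuous_const.prodMk continuous_fst)).sub
          (hTc.comp continuous_snd))).mul
      (g.continuous.comp (hTc.comp continuous_snd))
  have hint1 : Integrable
      (Function.uncurry fun (u : En n) (p : En n × En n) =>
        f (T α xbar u - T α p.1 p.2) * g (T α p.1 p.2))
      ((volume : Measure (En n)).prod (volume : Measure (En n × En n))) := by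
    rw [integrable_prod_iff' hmeas]
    constructor
    · exact Filter.Eventually.of_forall fun p =>
        (slice_int α hα f xbar (T α p.1 p.2)).mul_const (g (T α p.1 p.2))
    · refine Integrable.mono' ((hgint.norm).const_mul K) hmeas.norm.prod_swap.integral_prod_right' ?_
      refine Filter.Eventually.of_forall fun p => ?_
      rw [Real.norm_of_nonneg (integral_nonneg fun u => norm_nonneg _)]
      calc (∫ u : En n, ‖f (T α xbar u - T α p.1 p.2) * g (T α p.1 p.2)‖)
          = (∫ u : En n, ‖f (T α xbar u - T α p.1 p.2)‖) * ‖g (T α p.1 p.2)‖ := by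
            simp only [norm_mul]
            exact integral_mul_const _ _
        _ ≤ K * ‖g (T α p.1 p.2)‖ :=
            mul_le_mul_of_nonneg_right (hK xbar _) (norm_nonneg _)
  -- step B : simplify the inner u-integral for fixed p
  have stepB : ∀ p : En n × En n,
      (∫ u : En n, f (T α xbar u - T α p.1 p.2) * g (T α p.1 p.2))
        = (∫ u : En n, f (T α (xbar - p.1) u)) * g (T α p.1 p.2) := by
    intro p
    rw [integral_mul_const]
    congr 1
    simp only [T_sub]
    exact integral_sub_right_eq_self (fun u : En n => f (T α (xbar - p.1) u)) p.2
  -- integrability for splitting the p-integral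
  have hint2 : Integrable
      (fun p : En n × En n => (∫ u : En n, f (T α (xbar - p.1) u)) * g (T α p.1 p.2))
      ((volume : Measure (En n)).prod (volume : Measure (En n))) := by
    have hSM : StronglyMeasurable (fun a : En n => ∫ u : En n, f (T α a u)) :=
      (f.continuous.comp hTc).stronglyMeasurable.integral_prod_right'
    refine Integrable.bdd_mul hgint
      ((hSM.comp_measurable (measurable_const.sub measurable_fst)).aestronglyMeasurable)
      (c := K) (Filter.Eventually.of_forall fun p => ?_)
    calc ‖∫ u : En n, f (T α (xbar - p.1) u)‖ ≤ ∫ u : En n, ‖f (T α (xbar - p.1) u)‖ :=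
          norm_integral_le_integral_norm _
      _ ≤ K := by simpa [sub_zero] using hK (xbar - p.1) 0
  -- now the computation
  calc photoBar n (fun z => ∫ w : E2n n, f (z - w) * g w) α xbar
      = c • ∫ u : En n, (∫ w : E2n n, f (T α xbar u - w) * g w) := rfl
    _ = c • ∫ u : En n, c • ∫ p : En n × En n,
          f (T α xbar u - T α p.1 p.2) * g (T α p.1 p.2) := by
        simp only [stepA]
    _ = (c * c) • ∫ u : En n, ∫ p : En n × En n,
          f (T α xbar u - T α p.1 p.2) * g (T α p.1 p.2) := by
        rw [integral_smul, smul_smul]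
    _ = (c * c) • ∫ p : En n × En n, ∫ u : En n,
          f (T α xbar u - T α p.1 p.2) * g (T α p.1 p.2) := by
        exact congrArg (HSMul.hSMul (c * c)) (integral_integral_swap hint1)
    _ = (c * c) • ∫ p : En n × En n,
          (∫ u : En n, f (T α (xbar - p.1) u)) * g (T α p.1 p.2) := by
        simp only [stepB]
    _ = (c * c) • ∫ y : En n, ∫ v : En n,
          (∫ u : En n, f (T α (xbar - y) u)) * g (T α y v) := by
        exact congrArg (HSMul.hSMul (c * c)) (integral_prod _ hint2)
    _ = (c * c) • ∫ y : En n,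
          (∫ u : En n, f (T α (xbar - y) u)) * ∫ v : En n, g (T α y v) := by
        simp only [integral_const_mul]
    _ = ∫ y : En n, photoBar n (⇑f) α (xbar - y) * photoBar n (⇑g) α y := by
        have hpt : ∀ y : En n, photoBar n (⇑f) α (xbar - y) * photoBar n (⇑g) α y
            = (c * c) • ((∫ u : En n, f (T α (xbar - y) u)) * ∫ v : En n, g (T α y v)) := by
          intro y
          rw [show photoBar n (⇑f) α (xbar - y) = c • ∫ u : En n, f (T α (xbar - y) u) from rfl,
            show photoBar n (⇑g) α y = c • ∫ v : En n, g (T α y v) from rfl,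
            smul_mul_assoc, mul_smul_comm, smul_smul]
        rw [show (∫ y : En n, photoBar n (⇑f) α (xbar - y) * photoBar n (⇑g) α y)
            = ∫ y : En n, (c * c) •
              ((∫ u : En n, f (T α (xbar - y) u)) * ∫ v : En n, g (T α y v)) from by
          simp only [hpt], integral_smul]
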